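/- Let X be a complete metric space, let S(·,·) be a process on X with pullback attractor 𝒜(·), and let D ⊆ X be a bounded set such that 𝒜(s) ⊆ D for every s ∈ ℝ. Then for every t ∈ ℝ: (i) 𝒜(t) ⊆ S(t,s)D for all s ≤ t, and (ii) Δ_X(closure(S(t,s)D), 𝒜(t)) → 0 as s → −∞, i.e. 𝒜(t) is the limit of the sets closure(S(t,s)D) in the Hausdorff metric. -/

import Mathlib

open Filter Topology Metric Bornology

/-- A process on a metric space `X`: a two-parameter family `S t s : X → X` (`t ≥ s`)
with `S t t = id`, `S t τ ∘ S τ s = S t s` for `t ≥ τ ≥ s`, and `(t, s, x) ↦ S t s x`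
continuous on the region `s ≤ t`. -/
def IsProcess {X : Type*} [MetricSpace X] (S : ℝ → ℝ → X → X) : Prop :=
  (∀ t : ℝ, S t t = id) ∧
  (∀ t τ s : ℝ, s ≤ τ → τ ≤ t → S t τ ∘ S τ s = S t s) ∧
  ContinuousOn (fun p : ℝ × ℝ × X => S p.1 p.2.1 p.2.2) {p : ℝ × ℝ × X | p.2.1 ≤ p.1}

/-- The family `A(·)` is pullback attracting for the process `S`:
for every bounded `B` and every `t`, `ρ_X(S(t,s)B, A(t)) → 0` as `s → −∞`. -/
def PullbackAttracts {X : Type*} [MetricSpace X] (S : ℝ → ℝ → X → X) (A : ℝ → Set X) :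
    Prop :=
  ∀ B : Set X, IsBounded B → ∀ t : ℝ, ∀ ε : ℝ, 0 < ε → ∃ s₀ : ℝ, ∀ s ≤ s₀, ∀ x ∈ B,
    EMetric.infEdist (S t s x) (A t) < ENNReal.ofReal ε

/-- A pullback attractor for the process `S`: a family of compact sets that is
invariant, pullback attracting, and minimal among such families. -/
def IsPullbackAttractor {X : Type*} [MetricSpace X] (S : ℝ → ℝ → X → X)
    (A : ℝ → Set X) : Prop :=
  (∀ t : ℝ, IsCompact (A t)) ∧
  (∀ t s : ℝ, s ≤ t → S t s '' A s = A t) ∧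
  PullbackAttracts S A ∧
  (∀ C : ℝ → Set X, (∀ t : ℝ, IsCompact (C t)) →
    (∀ t s : ℝ, s ≤ t → S t s '' C s = C t) → PullbackAttracts S C →
    ∀ t : ℝ, A t ⊆ C t)

/-- If `A(·)` is the pullback attractor of a process `S` and `D` is a bounded set
containing `A(s)` for every `s`, then for every `t`: (i) `A(t) ⊆ S(t,s)D` for all
`s ≤ t`, and (ii) `closure (S(t,s)D) → A(t)` in the Hausdorff metric as `s → −∞`. -/
theorem stmt9 {X : Type*} [MetricSpace X] [CompleteSpace X]
    (S : ℝ → ℝ → X → X) (hproc : IsProcess S)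
    (A : ℝ → Set X) (hA : IsPullbackAttractor S A)
    (D : Set X) (hD : IsBounded D) (hAD : ∀ s : ℝ, A s ⊆ D) :
    ∀ t : ℝ,
      (∀ s ≤ t, A t ⊆ S t s '' D) ∧
      Tendsto (fun s : ℝ => EMetric.hausdorffEdist (closure (S t s '' D)) (A t))
        atBot (𝓝 0) := by
  obtain ⟨hcomp, hinv, hattr, hmin⟩ := hA
  intro t
  have h1 : ∀ s ≤ t, A t ⊆ S t s '' D := by
    intro s hs
    rw [← hinv t s hs]
    exact Set.image_mono (hAD s)
  refine ⟨h1, ?_⟩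
  rw [ENNReal.tendsto_nhds_zero]
  intro ε hε
  set ε' := min ε 1 with hε'def
  have hne : ε' ≠ ⊤ := ne_top_of_le_ne_top (by norm_num) (min_le_right _ _)
  have hε' : 0 < ε'.toReal := ENNReal.toReal_pos (lt_min hε one_pos).ne' hne
  obtain ⟨s₀, hs₀⟩ := hattr D hD t ε'.toReal hε'
  filter_upwards [eventually_le_atBot (min s₀ t)] with s hs
  have hst : s ≤ t := le_trans hs (min_le_right _ _)
  have hss0 : s ≤ s₀ := le_trans hs (min_le_left _ _)
  rw [show EMetric.hausdorffEdist (closure (S t s '' D)) (A t) = EMetric.hausdorffEdist (S t s '' D) (A t) from EMetric.hausdorffEdist_closure₁]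
  have hle : EMetric.hausdorffEdist (S t s '' D) (A t) ≤ ENNReal.ofReal ε'.toReal := by
    apply EMetric.hausdorffEdist_le_of_infEdist
    · rintro x ⟨y, hy, rfl⟩
      exact (hs₀ s hss0 y hy).le
    · intro x hx
      rw [EMetric.infEdist_zero_of_mem (h1 s hst hx)]
      exact zero_le
  calc EMetric.hausdorffEdist (S t s '' D) (A t) ≤ ENNReal.ofReal ε'.toReal := hle
    _ = ε' := ENNReal.ofReal_toReal hne
    _ ≤ ε := min_le_left _ _
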